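/- arXiv:0803.2963 — 3 statements merged into one kernel-verified Lean document; each statement's English description precedes it below -/
import Mathlib

section
/- For any integer n ≥ 2, any 1 ≤ n₁ ≤ n − 1 with n₂ = n − n₁, any μ ∈ ℝ and any real numbers ε₁, …, εₙ, one has CV(2) = C(n−1, n₂−1) Σ_{i=1}^n ε_i² − 2 C(n−2, n₁−1) (1/n₁) Σ_{i=1}^n ε_i (Σ_{j≠i} ε_j) + (n₂/n₁²) · (C(n−1, n₁−1) Σ_{i=1}^n ε_i² + 2 C(n−2, n₁−2) Σ_{1 ≤ j₁ < j₂ ≤ n} ε_{j₁} ε_{j₂}), where C(a, b) denotes the binomial coefficient (with C(a, b) = 0 if b < 0). -/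
open Finset

lemma count_lemma (u A B : Finset ℕ) (k : ℕ) (hA : A ⊆ u) (hB : B ⊆ u)
    (hAB : Disjoint A B) (hk : A.card ≤ k) :
    (((u.powersetCard k)).filter (fun S => A ⊆ S ∧ Disjoint S B)).card
      = (u.card - A.card - B.card).choose (k - A.card) := by
  have hBu : B ⊆ u \ A := by
    intro x hx
    simp only [mem_sdiff]
    exact ⟨hB hx, fun hxA => Finset.disjoint_left.mp hAB hxA hx⟩
  have hcard : ((u \ A) \ B).card = u.card - A.card - B.card := by
    rw [card_sdiff_of_subset hBu, card_sdiff_of_subset hA]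
  rw [← hcard, ← Finset.card_powersetCard]
  apply Finset.card_nbij' (fun S => S \ A) (fun T => T ∪ A)
  · intro S hS
    simp only [mem_coe, mem_filter, mem_powersetCard] at hS
    obtain ⟨⟨hSu, hSc⟩, hAS, hSB⟩ := hS
    rw [mem_coe, mem_powersetCard]
    constructor
    · intro x hx
      simp only [mem_sdiff] at hx ⊢
      exact ⟨⟨hSu hx.1, hx.2⟩, fun hxB => Finset.disjoint_left.mp hSB hx.1 hxB⟩
    · rw [card_sdiff_of_subset hAS, hSc]
  · intro T hT
    rw [mem_coe, mem_powersetCard] at hT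
    obtain ⟨hTsub, hTc⟩ := hT
    have hTA : Disjoint T A := by
      apply Finset.disjoint_left.mpr
      intro x hxT hxA
      have := hTsub hxT
      simp [mem_sdiff, hxA] at this
    have hTB : Disjoint T B := by
      apply Finset.disjoint_left.mpr
      intro x hxT hxB
      have := hTsub hxT
      simp [mem_sdiff, hxB] at this
    simp only [mem_coe, mem_filter, mem_powersetCard]
    refine ⟨⟨?_, ?_⟩, ?_, ?_⟩
    · apply Finset.union_subset _ hA
      intro x hx
      have := hTsub hx
      simp only [mem_sdiff] at this
      exact this.1.1
    · rw [Finset.card_union_of_disjoint hTA, hTc]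
      omega
    · exact Finset.subset_union_right
    · exact Finset.disjoint_union_left.mpr ⟨hTB, hAB⟩
  · intro S hS
    simp only [mem_coe, mem_filter, mem_powersetCard] at hS
    exact Finset.sdiff_union_of_subset hS.2.1
  · intro T hT
    rw [mem_coe, mem_powersetCard] at hT
    have hTA : Disjoint T A := by
      apply Finset.disjoint_left.mpr
      intro x hxT hxA
      have := hT.1 hxT
      simp [mem_sdiff, hxA] at this
    beta_reduce
    rw [Finset.union_sdiff_distrib, Finset.sdiff_self, Finset.union_empty,
      Finset.sdiff_eq_self_of_disjoint hTA]

lemma count_notmem (n k i : ℕ) (hi : i ∈ range n) :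
    ((((range n).powersetCard k)).filter (fun S => i ∉ S)).card = (n - 1).choose k := by
  have h : (((range n).powersetCard k)).filter (fun S => i ∉ S)
      = (((range n).powersetCard k)).filter (fun S => ∅ ⊆ S ∧ Disjoint S {i}) := by
    apply Finset.filter_congr
    intro S _
    simp [Finset.disjoint_singleton_right]
  rw [h, count_lemma _ _ _ _ (Finset.empty_subset _) (by simpa using hi) (by simp) (Nat.zero_le _)]
  simp

lemma count_mem_notmem (n k l i : ℕ) (hl : l ∈ range n) (hi : i ∈ range n)
    (hne : l ≠ i) (hk : 1 ≤ k) :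
    ((((range n).powersetCard k)).filter (fun S => l ∈ S ∧ i ∉ S)).card
      = (n - 2).choose (k - 1) := by
  have h : (((range n).powersetCard k)).filter (fun S => l ∈ S ∧ i ∉ S)
      = (((range n).powersetCard k)).filter (fun S => {l} ⊆ S ∧ Disjoint S {i}) := by
    apply Finset.filter_congr
    intro S _
    simp [Finset.disjoint_singleton_right]
  rw [h, count_lemma _ _ _ _ (by simpa using hl) (by simpa using hi)
    (by simpa using hne) (by simpa using hk)]
  simp only [card_range, card_singleton]
  congr 1

lemma count_mem_mem (n k l m : ℕ) (hl : l ∈ range n) (hm : m ∈ range n)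
    (hne : l ≠ m) (hk : 2 ≤ k) :
    ((((range n).powersetCard k)).filter (fun S => l ∈ S ∧ m ∈ S)).card
      = (n - 2).choose (k - 2) := by
  have h : (((range n).powersetCard k)).filter (fun S => l ∈ S ∧ m ∈ S)
      = (((range n).powersetCard k)).filter (fun S => {l, m} ⊆ S ∧ Disjoint S ∅) := by
    apply Finset.filter_congr
    intro S _
    simp [Finset.insert_subset_iff]
  have hcard2 : ({l, m} : Finset ℕ).card = 2 := by
    rw [Finset.card_insert_of_notMem (by simp [hne]), card_singleton]
  rw [h, count_lemma _ _ _ _ (by simp [Finset.insert_subset_iff]; exact ⟨by simpa using hl, by simpa using hm⟩)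
    (Finset.empty_subset _) (by simp) (by omega)]
  simp [hcard2]

lemma count_mem_mem_small (n k l m : ℕ) (hne : l ≠ m) (hk : k < 2) :
    ((((range n).powersetCard k)).filter (fun S => l ∈ S ∧ m ∈ S)).card = 0 := by
  rw [Finset.card_eq_zero, Finset.filter_eq_empty_iff]
  intro S hS
  rw [mem_powersetCard] at hS
  rintro ⟨hlS, hmS⟩
  have : ({l, m} : Finset ℕ) ⊆ S := by simp [Finset.insert_subset_iff, hlS, hmS]
  have h2 : ({l, m} : Finset ℕ).card = 2 := by
    rw [Finset.card_insert_of_notMem (by simp [hne]), card_singleton]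
  have := Finset.card_le_card this
  omega

lemma swap_sum2 (n k : ℕ) (p : ℕ → ℕ → Finset ℕ → Prop) [∀ i l S, Decidable (p i l S)]
    (f : ℕ → ℕ → ℝ) :
    ∑ S ∈ (range n).powersetCard k, ∑ i ∈ range n, ∑ l ∈ range n,
        (if p i l S then f i l else 0)
      = ∑ i ∈ range n, ∑ l ∈ range n,
          (((((range n).powersetCard k)).filter (p i l)).card : ℝ) * f i l := by
  rw [Finset.sum_comm]
  refine Finset.sum_congr rfl fun i _ => ?_
  rw [Finset.sum_comm]
  refine Finset.sum_congr rfl fun l _ => ?_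
  rw [← Finset.sum_filter, Finset.sum_const, nsmul_eq_mul]

lemma swap_sum1 (n k : ℕ) (p : ℕ → Finset ℕ → Prop) [∀ i S, Decidable (p i S)]
    (f : ℕ → ℝ) :
    ∑ S ∈ (range n).powersetCard k, ∑ i ∈ range n, (if p i S then f i else 0)
      = ∑ i ∈ range n, (((((range n).powersetCard k)).filter (p i)).card : ℝ) * f i := by
  rw [Finset.sum_comm]
  refine Finset.sum_congr rfl fun i _ => ?_
  rw [← Finset.sum_filter, Finset.sum_const, nsmul_eq_mul]

lemma lemA (n k : ℕ) (f : ℕ → ℝ) :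
    ∑ S ∈ (range n).powersetCard k, ∑ i ∈ range n \ S, f i
      = ((n - 1).choose k : ℝ) * ∑ i ∈ range n, f i := by
  have h1 : ∀ S ∈ (range n).powersetCard k, (∑ i ∈ range n \ S, f i)
      = ∑ i ∈ range n, (if i ∉ S then f i else 0) := by
    intro S _
    rw [← Finset.sum_filter]
    congr 1
    rw [Finset.sdiff_eq_filter]
  rw [Finset.sum_congr rfl h1, swap_sum1, Finset.mul_sum]
  refine Finset.sum_congr rfl fun i hi => ?_
  rw [count_notmem n k i hi]

lemma lemC (n k : ℕ) (hk : 1 ≤ k) (f : ℕ → ℕ → ℝ) :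
    ∑ S ∈ (range n).powersetCard k, ∑ i ∈ range n \ S, ∑ l ∈ S, f i l
      = ((n - 2).choose (k - 1) : ℝ) * ∑ i ∈ range n, ∑ l ∈ (range n).erase i, f i l := by
  have h1 : ∀ S ∈ (range n).powersetCard k, (∑ i ∈ range n \ S, ∑ l ∈ S, f i l)
      = ∑ i ∈ range n, ∑ l ∈ range n, (if l ∈ S ∧ i ∉ S then f i l else 0) := by
    intro S hS
    rw [mem_powersetCard] at hS
    have hfil : (range n).filter (· ∈ S) = S := by
      rw [Finset.filter_mem_eq_inter, Finset.inter_eq_right.mpr hS.1]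
    symm
    calc ∑ i ∈ range n, ∑ l ∈ range n, (if l ∈ S ∧ i ∉ S then f i l else 0)
        = ∑ i ∈ range n, (if i ∉ S then ∑ l ∈ range n, (if l ∈ S then f i l else 0) else 0) := by
          refine Finset.sum_congr rfl fun i _ => ?_
          by_cases h : i ∈ S
          · simp [h]
          · simp [h]
      _ = ∑ i ∈ range n \ S, ∑ l ∈ range n, (if l ∈ S then f i l else 0) := by
          rw [← Finset.sum_filter, ← Finset.sdiff_eq_filter]
      _ = ∑ i ∈ range n \ S, ∑ l ∈ S, f i l := by
          refine Finset.sum_congr rfl fun i _ => ?_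
          rw [← Finset.sum_filter, hfil]
  rw [Finset.sum_congr rfl h1, swap_sum2, Finset.mul_sum]
  refine Finset.sum_congr rfl fun i hi => ?_
  rw [← Finset.filter_ne' (range n) i, Finset.mul_sum, Finset.sum_filter]
  refine Finset.sum_congr rfl fun l hl => ?_
  split_ifs with h
  · rw [count_mem_notmem n k l i hl hi h hk]
  · simp only [ne_eq, not_not] at h
    subst h
    have : (((range n).powersetCard k)).filter (fun S => l ∈ S ∧ l ∉ S) = ∅ := by
      rw [Finset.filter_eq_empty_iff]
      intro S _
      tauto
    rw [this]
    simp

lemma lemD (n k : ℕ) (hk : 1 ≤ k) (f : ℕ → ℕ → ℝ) :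
    ∑ S ∈ (range n).powersetCard k, ∑ l ∈ S, ∑ m ∈ S, f l m
      = ((n - 1).choose (k - 1) : ℝ) * ∑ l ∈ range n, f l l
        + (if 2 ≤ k then ((n - 2).choose (k - 2) : ℝ) else 0) *
            ∑ l ∈ range n, ∑ m ∈ (range n).erase l, f l m := by
  have h1 : ∀ S ∈ (range n).powersetCard k, (∑ l ∈ S, ∑ m ∈ S, f l m)
      = ∑ l ∈ range n, ∑ m ∈ range n, (if l ∈ S ∧ m ∈ S then f l m else 0) := by
    intro S hS
    rw [mem_powersetCard] at hS
    have hfil : (range n).filter (· ∈ S) = S := by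
      rw [Finset.filter_mem_eq_inter, Finset.inter_eq_right.mpr hS.1]
    symm
    calc ∑ l ∈ range n, ∑ m ∈ range n, (if l ∈ S ∧ m ∈ S then f l m else 0)
        = ∑ l ∈ range n, (if l ∈ S then ∑ m ∈ range n, (if m ∈ S then f l m else 0) else 0) := by
          refine Finset.sum_congr rfl fun l _ => ?_
          by_cases h : l ∈ S
          · simp [h]
          · simp [h]
      _ = ∑ l ∈ S, ∑ m ∈ range n, (if m ∈ S then f l m else 0) := by
          rw [← Finset.sum_filter, hfil]
      _ = ∑ l ∈ S, ∑ m ∈ S, f l m := by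
          refine Finset.sum_congr rfl fun l _ => ?_
          rw [← Finset.sum_filter, hfil]
  rw [Finset.sum_congr rfl h1, swap_sum2, Finset.mul_sum, Finset.mul_sum,
    ← Finset.sum_add_distrib]
  refine Finset.sum_congr rfl fun l hl => ?_
  rw [← Finset.add_sum_erase (range n)
    (fun m => ((((range n).powersetCard k).filter (fun S => l ∈ S ∧ m ∈ S)).card : ℝ) * f l m) hl]
  congr 1
  · -- diagonal term
    have hdiag : (((range n).powersetCard k)).filter (fun S => l ∈ S ∧ l ∈ S)
        = (((range n).powersetCard k)).filter (fun S => {l} ⊆ S ∧ Disjoint S (∅ : Finset ℕ)) := by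
      apply Finset.filter_congr
      intro S _
      simp
    rw [hdiag, count_lemma _ _ _ _ (by simpa using hl) (Finset.empty_subset _) (by simp)
      (by simpa using hk)]
    simp
  · rw [Finset.mul_sum]
    refine Finset.sum_congr rfl fun m hm => ?_
    have hmne : l ≠ m := (Finset.ne_of_mem_erase hm).symm
    have hmr : m ∈ range n := Finset.mem_of_mem_erase hm
    split_ifs with h2
    · rw [count_mem_mem n k l m hl hmr hmne h2]
    · rw [count_mem_mem_small n k l m hmne (by omega)]
      simp

lemma pair_lemma (n : ℕ) (f : ℕ → ℝ) :
    ∑ i ∈ range n, ∑ j ∈ (range n).erase i, f i * f j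
      = 2 * ∑ j₂ ∈ range n, ∑ j₁ ∈ range j₂, f j₁ * f j₂ := by
  induction n with
  | zero => simp
  | succ n ih =>
    rw [Finset.sum_range_succ, Finset.sum_range_succ
      (fun j₂ => ∑ j₁ ∈ range j₂, f j₁ * f j₂)]
    have h1 : (range (n+1)).erase n = range n := by
      rw [Finset.range_add_one, Finset.erase_insert (by simp)]
    have h3 : ∑ i ∈ range n, ∑ j ∈ (range (n+1)).erase i, f i * f j
        = ∑ i ∈ range n, (f i * f n + ∑ j ∈ (range n).erase i, f i * f j) := by
      refine Finset.sum_congr rfl fun i hi => ?_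
      have hne : i ≠ n := by simp at hi; omega
      rw [Finset.range_add_one, Finset.erase_insert_of_ne hne.symm,
        Finset.sum_insert (by simp)]
    rw [h3, Finset.sum_add_distrib, ih, h1]
    have h4 : ∑ j ∈ range n, f n * f j = ∑ j ∈ range n, f j * f n :=
      Finset.sum_congr rfl fun j _ => mul_comm _ _
    rw [h4]
    ring

/-- with `Y_i = μ + ε_i` and
`CV(2) = ∑_S ∑_{i ∈ S^c} (Y_i − (1/n₁) ∑_{l ∈ S} Y_l)²` over all subsets `S ⊆ {1,…,n}` of
cardinality `n₁`, one has
`CV(2) = C(n−1, n₂−1) ∑ ε_i² − 2 C(n−2, n₁−1) (1/n₁) ∑_i ε_i (∑_{j≠i} ε_j)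
        + (n₂/n₁²) (C(n−1, n₁−1) ∑ ε_i² + 2 C(n−2, n₁−2) ∑_{j₁<j₂} ε_{j₁} ε_{j₂})`,
with the convention `C(a, b) = 0` if `b < 0` (relevant for `C(n−2, n₁−2)` when `n₁ = 1`). -/
theorem cv_two_formula (n n₁ : ℕ) (hn : 2 ≤ n) (hn₁ : 1 ≤ n₁) (hn₁' : n₁ ≤ n - 1)
    (n₂ : ℕ) (hn₂ : n₂ = n - n₁) (μ : ℝ) (ε : ℕ → ℝ) :
    ∑ S ∈ (Finset.range n).powersetCard n₁, ∑ i ∈ Finset.range n \ S,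
        ((μ + ε i) - (1 / (n₁ : ℝ)) * ∑ l ∈ S, (μ + ε l)) ^ 2 =
      ((n - 1).choose (n₂ - 1) : ℝ) * ∑ i ∈ Finset.range n, (ε i) ^ 2
        - 2 * ((n - 2).choose (n₁ - 1) : ℝ) * (1 / (n₁ : ℝ)) *
            ∑ i ∈ Finset.range n, ε i * ∑ j ∈ (Finset.range n).erase i, ε j
        + ((n₂ : ℝ) / (n₁ : ℝ) ^ 2) *
            (((n - 1).choose (n₁ - 1) : ℝ) * ∑ i ∈ Finset.range n, (ε i) ^ 2
              + 2 * (if 2 ≤ n₁ then ((n - 2).choose (n₁ - 2) : ℝ) else 0) *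
                  ∑ j₂ ∈ Finset.range n, ∑ j₁ ∈ Finset.range j₂, ε j₁ * ε j₂) := by
  have hn₁0 : (n₁ : ℝ) ≠ 0 := Nat.cast_ne_zero.mpr (by omega)
  have key : ∀ S ∈ (range n).powersetCard n₁,
      (∑ i ∈ range n \ S, ((μ + ε i) - (1 / (n₁ : ℝ)) * ∑ l ∈ S, (μ + ε l)) ^ 2)
      = (∑ i ∈ range n \ S, (ε i) ^ 2)
        - 2 * (1 / (n₁ : ℝ)) * (∑ i ∈ range n \ S, ∑ l ∈ S, ε i * ε l)
        + (n₂ : ℝ) * (1 / (n₁ : ℝ)) ^ 2 * (∑ l ∈ S, ∑ m ∈ S, ε l * ε m) := by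
    intro S hS
    rw [mem_powersetCard] at hS
    obtain ⟨hsub, hcard⟩ := hS
    have hT : ∑ l ∈ S, (μ + ε l) = (n₁ : ℝ) * μ + ∑ l ∈ S, ε l := by
      rw [Finset.sum_add_distrib, Finset.sum_const, hcard, nsmul_eq_mul]
    have hμ : ∀ i, (μ + ε i) - (1 / (n₁ : ℝ)) * ∑ l ∈ S, (μ + ε l)
        = ε i - (1 / (n₁ : ℝ)) * ∑ l ∈ S, ε l := by
      intro i
      rw [hT]
      field_simp
      ring
    have hcompl : ((range n \ S).card : ℝ) = (n₂ : ℝ) := by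
      rw [card_sdiff_of_subset hsub, card_range, hcard, hn₂]
    calc ∑ i ∈ range n \ S, ((μ + ε i) - (1 / (n₁ : ℝ)) * ∑ l ∈ S, (μ + ε l)) ^ 2
        = ∑ i ∈ range n \ S, ((ε i) ^ 2
            - 2 * (1 / (n₁ : ℝ)) * (∑ l ∈ S, ε i * ε l)
            + (1 / (n₁ : ℝ)) ^ 2 * ((∑ l ∈ S, ε l) * (∑ m ∈ S, ε m))) := by
          refine Finset.sum_congr rfl fun i _ => ?_
          rw [hμ i, ← Finset.mul_sum]
          ring
      _ = (∑ i ∈ range n \ S, (ε i) ^ 2)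
            - 2 * (1 / (n₁ : ℝ)) * (∑ i ∈ range n \ S, ∑ l ∈ S, ε i * ε l)
            + ((range n \ S).card : ℝ) * ((1 / (n₁ : ℝ)) ^ 2 * ((∑ l ∈ S, ε l) * (∑ m ∈ S, ε m))) := by
          rw [Finset.sum_add_distrib, Finset.sum_sub_distrib, Finset.sum_const,
            nsmul_eq_mul, ← Finset.mul_sum]
      _ = (∑ i ∈ range n \ S, (ε i) ^ 2)
            - 2 * (1 / (n₁ : ℝ)) * (∑ i ∈ range n \ S, ∑ l ∈ S, ε i * ε l)
            + (n₂ : ℝ) * (1 / (n₁ : ℝ)) ^ 2 * (∑ l ∈ S, ∑ m ∈ S, ε l * ε m) := by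
          rw [hcompl, Finset.sum_mul_sum]
          ring
  rw [Finset.sum_congr rfl key, Finset.sum_add_distrib, Finset.sum_sub_distrib,
    ← Finset.mul_sum, ← Finset.mul_sum]
  rw [lemA n n₁ (fun i => (ε i) ^ 2), lemC n n₁ hn₁ (fun i l => ε i * ε l),
    lemD n n₁ hn₁ (fun l m => ε l * ε m)]
  have hP : ∑ i ∈ range n, ε i * ∑ j ∈ (range n).erase i, ε j
      = ∑ i ∈ range n, ∑ j ∈ (range n).erase i, ε i * ε j :=
    Finset.sum_congr rfl fun i _ => Finset.mul_sum _ _ _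
  have hsq : ∑ l ∈ range n, ε l * ε l = ∑ l ∈ range n, (ε l) ^ 2 :=
    Finset.sum_congr rfl fun l _ => (sq (ε l)).symm
  have hpair := pair_lemma n ε
  have hchoose : ((n - 1).choose n₁ : ℝ) = ((n - 1).choose (n₂ - 1) : ℝ) := by
    have h1 : n₂ - 1 = (n - 1) - n₁ := by omega
    rw [h1, Nat.choose_symm hn₁']
  rw [hP, hsq, hpair, hchoose]
  ring
end

section
/- For any integer n ≥ 2, any 1 ≤ n₁ ≤ n − 1 with n₂ = n − n₁, any μ ∈ ℝ and any real numbers ε₁, …, εₙ, one has CV(1) − CV(2) = C(n−1, n₂−1) · (nμ² + 2μ Σ_{i=1}^n ε_i) − (Σ_{i=1}^n ε_i²) · (n−2)!(n₁+n) / (n₁ · n₁! · (n₂−1)!) + (Σ_{i=1}^n ε_i)² · (n−2)!(n₁+1) / (n₁ · n₁! · (n₂−1)!), where C(a, b) denotes the binomial coefficient. -/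
open Finset
variable {α : Type*} [DecidableEq α]

theorem filt_not_mem (s : Finset α) (k : ℕ) (j : α) :
    (s.powersetCard k).filter (fun S => j ∉ S) = (s.erase j).powersetCard k := by
  ext S
  simp only [mem_filter, mem_powersetCard, subset_erase]
  tauto

theorem card_filt_mem_and (s : Finset α) (k : ℕ) {i : α} (hi : i ∈ s)
    (p : Finset α → Prop) [DecidablePred p]
    (hp : ∀ S : Finset α, i ∉ S → (p (insert i S) ↔ p S)) :
    ((s.powersetCard (k+1)).filter (fun S => i ∈ S ∧ p S)).card =
      (((s.erase i).powersetCard k).filter p).card := by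
  refine Finset.card_bij' (fun S _ => S.erase i) (fun S _ => insert i S) ?_ ?_ ?_ ?_
  · intro S hS
    simp only [mem_filter, mem_powersetCard] at hS ⊢
    obtain ⟨⟨hsub, hcard⟩, hiS, hpS⟩ := hS
    refine ⟨⟨erase_subset_erase _ hsub, ?_⟩, ?_⟩
    · rw [card_erase_of_mem hiS, hcard]; omega
    · rw [← (hp (S.erase i) (notMem_erase _ _)), insert_erase hiS]
      exact hpS
  · intro S hS
    simp only [mem_filter, mem_powersetCard, subset_erase] at hS ⊢
    obtain ⟨⟨⟨hsub, hiS⟩, hcard⟩, hpS⟩ := hS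
    refine ⟨⟨insert_subset hi hsub, ?_⟩, mem_insert_self _ _, ?_⟩
    · rw [card_insert_of_notMem hiS, hcard]
    · exact (hp S hiS).mpr hpS
  · intro S hS
    simp only [mem_filter] at hS
    exact insert_erase hS.2.1
  · intro S hS
    simp only [mem_filter, mem_powersetCard, subset_erase] at hS
    exact erase_insert hS.1.1.2

theorem count_mem (s : Finset α) (k : ℕ) {i : α} (hi : i ∈ s) :
    ((s.powersetCard (k+1)).filter (fun S => i ∈ S)).card = (s.card - 1).choose k := by
  have h : ((s.powersetCard (k+1)).filter (fun S => i ∈ S)) =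
      ((s.powersetCard (k+1)).filter (fun S => i ∈ S ∧ True)) := by simp
  rw [h, card_filt_mem_and s k hi (fun _ => True) (fun _ _ => Iff.rfl), filter_true_of_mem
    (fun _ _ => trivial), card_powersetCard, card_erase_of_mem hi]

theorem count_not_mem (s : Finset α) (k : ℕ) {i : α} (hi : i ∈ s) :
    ((s.powersetCard k).filter (fun S => i ∉ S)).card = (s.card - 1).choose k := by
  rw [filt_not_mem, card_powersetCard, card_erase_of_mem hi]

theorem count_mem_not_mem (s : Finset α) (k : ℕ) {i j : α} (hi : i ∈ s) (hj : j ∈ s)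
    (hij : i ≠ j) :
    ((s.powersetCard (k+1)).filter (fun S => i ∈ S ∧ j ∉ S)).card = (s.card - 2).choose k := by
  rw [card_filt_mem_and s k hi (fun S => j ∉ S)
    (fun S hS => by simp [mem_insert, hij.symm]), filt_not_mem, card_powersetCard,
    card_erase_of_mem (mem_erase.2 ⟨hij.symm, hj⟩), card_erase_of_mem hi]
  congr 1
variable {α : Type*} [DecidableEq α]

theorem sum_sdiff_swap (P : Finset (Finset α)) (s : Finset α) (F : α → ℝ) :
    ∑ S ∈ P, ∑ i ∈ s \ S, F i
      = ∑ i ∈ s, ((P.filter (fun S => i ∉ S)).card : ℝ) * F i := by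
  have h1 : ∀ S ∈ P, ∑ i ∈ s \ S, F i = ∑ i ∈ s, if i ∉ S then F i else 0 := by
    intro S _
    rw [sdiff_eq_filter, sum_filter]
  rw [sum_congr rfl h1, Finset.sum_comm]
  refine sum_congr rfl fun i _ => ?_
  rw [← sum_filter, sum_const, nsmul_eq_mul]

theorem sum_mem_swap (P : Finset (Finset α)) (s : Finset α) (hP : ∀ S ∈ P, S ⊆ s)
    (G : α → ℝ) :
    ∑ S ∈ P, ∑ l ∈ S, G l
      = ∑ l ∈ s, ((P.filter (fun S => l ∈ S)).card : ℝ) * G l := by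
  have h1 : ∀ S ∈ P, ∑ l ∈ S, G l = ∑ l ∈ s, if l ∈ S then G l else 0 := by
    intro S hS
    rw [← sum_filter, filter_mem_eq_inter, inter_eq_right.2 (hP S hS)]
  rw [sum_congr rfl h1, Finset.sum_comm]
  refine sum_congr rfl fun i _ => ?_
  rw [← sum_filter, sum_const, nsmul_eq_mul]

theorem sum_prod_swap (P : Finset (Finset α)) (s : Finset α) (hP : ∀ S ∈ P, S ⊆ s)
    (G F : α → ℝ) :
    ∑ S ∈ P, (∑ l ∈ S, G l) * (∑ i ∈ s \ S, F i)
      = ∑ l ∈ s, ∑ i ∈ s,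
          ((P.filter (fun S => l ∈ S ∧ i ∉ S)).card : ℝ) * (G l * F i) := by
  have h1 : ∀ S ∈ P, (∑ l ∈ S, G l) * (∑ i ∈ s \ S, F i)
      = ∑ l ∈ s, ∑ i ∈ s, if l ∈ S ∧ i ∉ S then G l * F i else 0 := by
    intro S hS
    have hl : ∑ l ∈ S, G l = ∑ l ∈ s, if l ∈ S then G l else 0 := by
      rw [← sum_filter, filter_mem_eq_inter, inter_eq_right.2 (hP S hS)]
    have hr : ∑ i ∈ s \ S, F i = ∑ i ∈ s, if i ∉ S then F i else 0 := by
      rw [sdiff_eq_filter, sum_filter]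
    rw [hl, hr, Finset.sum_mul_sum]
    refine sum_congr rfl fun l _ => sum_congr rfl fun i _ => ?_
    split_ifs with h1 h2 h3 <;> simp_all <;> ring
  rw [sum_congr rfl h1, Finset.sum_comm]
  refine sum_congr rfl fun l _ => ?_
  rw [Finset.sum_comm]
  refine sum_congr rfl fun i _ => ?_
  rw [← sum_filter, sum_const, nsmul_eq_mul]

/-- with `Y_i = μ + ε_i`,
`CV(1) = ∑_S ∑_{i ∈ S^c} Y_i²` and
`CV(2) = ∑_S ∑_{i ∈ S^c} (Y_i − (1/n₁) ∑_{l ∈ S} Y_l)²` (over all `S ⊆ {1,…,n}`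
of cardinality `n₁`), one has
`CV(1) − CV(2) = C(n−1, n₂−1) (n μ² + 2 μ ∑ ε_i)
  − (∑ ε_i²) (n−2)! (n₁+n) / (n₁ n₁! (n₂−1)!)
  + (∑ ε_i)² (n−2)! (n₁+1) / (n₁ n₁! (n₂−1)!)`. -/
theorem cv_difference_formula (n n₁ : ℕ) (hn : 2 ≤ n) (hn₁ : 1 ≤ n₁) (hn₁' : n₁ ≤ n - 1)
    (n₂ : ℕ) (hn₂ : n₂ = n - n₁) (μ : ℝ) (ε : ℕ → ℝ) :
    (∑ S ∈ (Finset.range n).powersetCard n₁, ∑ i ∈ Finset.range n \ S, (μ + ε i) ^ 2)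
      - ∑ S ∈ (Finset.range n).powersetCard n₁, ∑ i ∈ Finset.range n \ S,
          ((μ + ε i) - (1 / (n₁ : ℝ)) * ∑ l ∈ S, (μ + ε l)) ^ 2 =
      ((n - 1).choose (n₂ - 1) : ℝ) * (n * μ ^ 2 + 2 * μ * ∑ i ∈ Finset.range n, ε i)
        - (∑ i ∈ Finset.range n, (ε i) ^ 2) *
            (((n - 2).factorial : ℝ) * (n₁ + n)) /
              ((n₁ : ℝ) * (n₁.factorial : ℝ) * ((n₂ - 1).factorial : ℝ))
        + (∑ i ∈ Finset.range n, ε i) ^ 2 *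
            (((n - 2).factorial : ℝ) * (n₁ + 1)) /
              ((n₁ : ℝ) * (n₁.factorial : ℝ) * ((n₂ - 1).factorial : ℝ)) := by
  subst hn₂
  obtain ⟨m, rfl⟩ : ∃ m, n₁ = m + 1 := ⟨n₁ - 1, by omega⟩
  have hm2 : m ≤ n - 2 := by omega
  set s : Finset ℕ := Finset.range n with hs
  set P : Finset (Finset ℕ) := s.powersetCard (m + 1) with hP
  have hPsub : ∀ S ∈ P, S ⊆ s := fun S hS => (mem_powersetCard.1 hS).1
  have hcards : s.card = n := card_range n
  set Y : ℕ → ℝ := fun i => μ + ε i with hY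
  set T : ℝ := ∑ i ∈ s, Y i with hT
  set Q : ℝ := ∑ i ∈ s, Y i ^ 2 with hQ
  set A : ℝ := ((n - 2).choose m : ℝ) with hA
  set B : ℝ := ((n - 1).choose m : ℝ) with hB
  set Cc : ℝ := ((n - 1).choose (m + 1) : ℝ) with hCc
  set c : ℝ := 1 / ((m + 1 : ℕ) : ℝ) with hc
  set dnk : ℝ := ((n - (m + 1) : ℕ) : ℝ) with hdnk
  -- closed forms for the three basic sums
  have hCV1 : ∑ S ∈ P, ∑ i ∈ s \ S, Y i ^ 2 = Cc * Q := by
    rw [sum_sdiff_swap P s (fun i => Y i ^ 2)]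
    rw [hQ, mul_sum]
    refine sum_congr rfl fun i hi => ?_
    rw [hP, count_not_mem s (m + 1) hi, hcards]
  have hSW : ∑ S ∈ P, ∑ l ∈ S, Y l = B * T := by
    rw [sum_mem_swap P s hPsub Y, hT, mul_sum]
    refine sum_congr rfl fun i hi => ?_
    rw [hP, count_mem s m hi, hcards]
  have hSWV : ∑ S ∈ P, (∑ l ∈ S, Y l) * (∑ i ∈ s \ S, Y i) = A * (T ^ 2 - Q) := by
    rw [sum_prod_swap P s hPsub Y Y]
    have step1 : ∀ l ∈ s, ∀ i ∈ s,
        ((P.filter (fun S => l ∈ S ∧ i ∉ S)).card : ℝ) * (Y l * Y i)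
          = A * (Y l * Y i) - (if l = i then A * (Y l * Y i) else 0) := by
      intro l hl i hi
      by_cases h : l = i
      · subst h
        have : P.filter (fun S => l ∈ S ∧ l ∉ S) = ∅ :=
          filter_false_of_mem (fun S _ hc => (hc.2 hc.1).elim)
        rw [this]
        simp
      · rw [hP, count_mem_not_mem s m hl hi h, hcards, if_neg h, hA, sub_zero]
    rw [sum_congr rfl fun l hl => sum_congr rfl fun i hi => step1 l hl i hi]
    have step2 : ∀ l ∈ s,
        ∑ i ∈ s, (A * (Y l * Y i) - (if l = i then A * (Y l * Y i) else 0))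
          = (A * Y l) * T - A * (Y l * Y l) := by
      intro l hl
      rw [sum_sub_distrib]
      congr 1
      · rw [hT, mul_sum]
        exact sum_congr rfl fun i _ => by ring
      · rw [Finset.sum_ite_eq s l (fun i => A * (Y l * Y i)), if_pos hl]
    rw [sum_congr rfl step2, sum_sub_distrib, ← sum_mul, ← mul_sum, ← mul_sum, ← hT]
    have : ∑ l ∈ s, Y l * Y l = Q := by
      rw [hQ]; exact sum_congr rfl fun i _ => (sq (Y i)).symm
    rw [this]
    ring
  -- per-S difference
  have hdiff : ∀ S ∈ P,
      (∑ i ∈ s \ S, Y i ^ 2) - (∑ i ∈ s \ S, (Y i - c * ∑ l ∈ S, Y l) ^ 2)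
        = (2 * c + dnk * c ^ 2) * ((∑ l ∈ S, Y l) * (∑ i ∈ s \ S, Y i))
            - (dnk * c ^ 2 * T) * (∑ l ∈ S, Y l) := by
    intro S hS
    set W : ℝ := ∑ l ∈ S, Y l with hW
    have hcardsd : (s \ S).card = n - (m + 1) := by
      rw [card_sdiff_of_subset (hPsub S hS), hcards, (mem_powersetCard.1 hS).2]
    have hV : ∑ i ∈ s \ S, Y i = T - W := by
      have := Finset.sum_sdiff (f := Y) (hPsub S hS)
      rw [← hT] at this
      linarith [this]
    calc (∑ i ∈ s \ S, Y i ^ 2) - (∑ i ∈ s \ S, (Y i - c * W) ^ 2)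
        = ∑ i ∈ s \ S, (Y i ^ 2 - (Y i - c * W) ^ 2) := (sum_sub_distrib _ _).symm
      _ = ∑ i ∈ s \ S, ((2 * c * W) * Y i - c ^ 2 * W ^ 2) :=
          sum_congr rfl fun i _ => by ring
      _ = (2 * c * W) * (∑ i ∈ s \ S, Y i) - ((s \ S).card : ℝ) * (c ^ 2 * W ^ 2) := by
          rw [sum_sub_distrib, ← mul_sum, sum_const, nsmul_eq_mul]
      _ = (2 * c + dnk * c ^ 2) * (W * (∑ i ∈ s \ S, Y i)) - (dnk * c ^ 2 * T) * W := by
          rw [hcardsd, hV, ← hdnk]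
          ring
  -- combine
  have hMain : (∑ S ∈ P, ∑ i ∈ s \ S, Y i ^ 2)
      - (∑ S ∈ P, ∑ i ∈ s \ S, (Y i - c * ∑ l ∈ S, Y l) ^ 2)
        = (2 * c + dnk * c ^ 2) * (A * (T ^ 2 - Q)) - (dnk * c ^ 2 * T) * (B * T) := by
    rw [← sum_sub_distrib, sum_congr rfl hdiff, sum_sub_distrib, ← mul_sum, ← mul_sum,
      hSWV, hSW]
  rw [hMain]
  -- now pure algebra
  have hE : T = n * μ + ∑ i ∈ Finset.range n, ε i := by
    rw [hT, hY, ← hs, sum_add_distrib, sum_const, hcards, nsmul_eq_mul]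
  have hQ' : Q = n * μ ^ 2 + 2 * μ * (∑ i ∈ Finset.range n, ε i)
      + ∑ i ∈ Finset.range n, ε i ^ 2 := by
    rw [hQ, hY, ← hs]
    have : ∀ i ∈ s, (μ + ε i) ^ 2 = μ ^ 2 + 2 * μ * ε i + ε i ^ 2 := fun i _ => by ring
    rw [sum_congr rfl this, sum_add_distrib, sum_add_distrib, sum_const, hcards,
      nsmul_eq_mul, ← mul_sum]
  -- binomial / factorial identities
  have hcast1 : ((n - 1 : ℕ) : ℝ) = (n : ℝ) - 1 := by
    push_cast [Nat.cast_sub (by omega : 1 ≤ n)]; ring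
  have hA1 : ((m : ℝ) + 1) * Cc = ((n : ℝ) - 1) * A := by
    have h := Nat.add_one_mul_choose_eq (n - 2) m
    have h2 : n - 2 + 1 = n - 1 := by omega
    rw [h2] at h
    have := congrArg (fun x : ℕ => (x : ℝ)) h
    push_cast at this
    rw [hCc, hA, hcast1] at *
    push_cast
    linarith [this]
  have hA2 : ((n : ℝ) - ((m : ℝ) + 1)) * B = ((n : ℝ) - 1) * A := by
    have h := Nat.choose_succ_right_eq (n - 1) m
    have h3 : n - 1 - m = n - (m + 1) := by omega
    have := congrArg (fun x : ℕ => (x : ℝ)) h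
    push_cast [h3, Nat.cast_sub (by omega : m + 1 ≤ n)] at this
    -- this : C(n-1,m+1) * (m+1) = C(n-1,m) * (n - (m+1))
    have h4 : ((n : ℝ) - ((m : ℝ) + 1)) * B = ((m : ℝ) + 1) * Cc := by
      rw [hB, hCc]; push_cast; linarith [this]
    rw [h4, hA1]
  have hfac : ((n - 2).factorial : ℝ)
      = A * (m.factorial : ℝ) * ((n - (m + 1) - 1).factorial : ℝ) := by
    have h := Nat.choose_mul_factorial_mul_factorial hm2
    have h5 : n - 2 - m = n - (m + 1) - 1 := by omega
    rw [h5] at h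
    have := congrArg (fun x : ℕ => (x : ℝ)) h
    push_cast at this
    rw [hA]
    linarith [this]
  have hkfac : (((m + 1).factorial : ℕ) : ℝ) = ((m : ℝ) + 1) * (m.factorial : ℝ) := by
    rw [Nat.factorial_succ]; push_cast; ring
  have hsymm : ((n - 1).choose (n - (m + 1) - 1) : ℝ) = Cc := by
    have h6 : n - (m + 1) - 1 = (n - 1) - (m + 1) := by omega
    rw [h6, Nat.choose_symm (by omega : m + 1 ≤ n - 1), hCc]
  have hdnk' : dnk = (n : ℝ) - ((m : ℝ) + 1) := by
    rw [hdnk]; push_cast [Nat.cast_sub (by omega : m + 1 ≤ n)]; ring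
  have hm1 : ((m : ℝ) + 1) ≠ 0 := by positivity
  have hnm : (n : ℝ) - ((m : ℝ) + 1) ≠ 0 := by
    have : (m : ℝ) + 1 ≤ (n : ℝ) - 1 := by
      have := hn₁'
      have h7 : (m + 1 : ℕ) ≤ n - 1 := this
      have := (Nat.cast_le (α := ℝ)).2 h7
      rw [hcast1] at this
      push_cast at this
      linarith
    linarith
  have hmf : (m.factorial : ℝ) ≠ 0 := by positivity
  have hnf : ((n - (m + 1) - 1).factorial : ℝ) ≠ 0 := by positivity
  have hCcVal : Cc = ((n : ℝ) - 1) * A / ((m : ℝ) + 1) := by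
    field_simp
    linarith [hA1]
  have hBVal : B = ((n : ℝ) - 1) * A / ((n : ℝ) - ((m : ℝ) + 1)) := by
    field_simp
    linarith [hA2]
  rw [hsymm, hfac, hkfac, hdnk', hE, hQ', hCcVal, hBVal, hc]
  push_cast
  field_simp
  ring
end

section
/- For any integer n ≥ 2, any 1 ≤ n₁ ≤ n − 1 with n₂ = n − n₁, and any real numbers ε₁, …, εₙ, when μ = 0 the inequality CV(1) − CV(2) > 0 holds if and only if ((n−1) n₁ / n) (Σ_{i=1}^n ε_i)² > (n + n₁) Σ_{j=1}^n (ε_j − ε̄)², where ε̄ = (1/n) Σ_{i=1}^n ε_i. -/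
open Finset

private lemma sum_filter_mem_pc (U : Finset ℕ) (k : ℕ) (hk : 1 ≤ k) (l : ℕ) (hl : l ∈ U)
    (g : Finset ℕ → ℝ) :
    ∑ S ∈ (U.powersetCard k).filter (fun S => l ∈ S), g S
      = ∑ S' ∈ (U.erase l).powersetCard (k - 1), g (insert l S') := by
  refine Finset.sum_nbij' (fun S => S.erase l) (fun S' => insert l S') ?_ ?_ ?_ ?_ ?_
  · intro S hS
    simp only [Finset.mem_filter, Finset.mem_powersetCard] at hS ⊢
    obtain ⟨⟨hsub, hcard⟩, hmem⟩ := hS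
    exact ⟨Finset.erase_subset_erase l hsub, by rw [Finset.card_erase_of_mem hmem, hcard]⟩
  · intro S' hS'
    simp only [Finset.mem_powersetCard] at hS'
    have hlnd : l ∉ S' := fun h => (Finset.mem_erase.mp (hS'.1 h)).1 rfl
    simp only [Finset.mem_filter, Finset.mem_powersetCard]
    refine ⟨⟨?_, ?_⟩, Finset.mem_insert_self l S'⟩
    · intro x hx
      rcases Finset.mem_insert.mp hx with rfl | hx
      · exact hl
      · exact (Finset.erase_subset l U) (hS'.1 hx)
    · rw [Finset.card_insert_of_notMem hlnd, hS'.2, Nat.sub_add_cancel hk]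
  · intro S hS
    simp only [Finset.mem_filter] at hS
    exact Finset.insert_erase hS.2
  · intro S' hS'
    simp only [Finset.mem_powersetCard] at hS'
    have hlnd : l ∉ S' := fun h => (Finset.mem_erase.mp (hS'.1 h)).1 rfl
    exact Finset.erase_insert hlnd
  · intro S hS
    simp only [Finset.mem_filter] at hS
    rw [Finset.insert_erase hS.2]

private lemma card_filter_mem_pc (U : Finset ℕ) (k : ℕ) (hk : 1 ≤ k) (l : ℕ) (hl : l ∈ U) :
    ((((U.powersetCard k).filter (fun S => l ∈ S)).card : ℝ))
      = ((U.card - 1).choose (k - 1) : ℝ) := by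
  have h := sum_filter_mem_pc U k hk l hl (fun _ => (1 : ℝ))
  simp only [Finset.sum_const, nsmul_eq_mul, mul_one] at h
  rw [h, Finset.card_powersetCard, Finset.card_erase_of_mem hl]

private lemma swap_pc (U : Finset ℕ) (k : ℕ) (g : Finset ℕ → ℕ → ℝ) :
    ∑ S ∈ U.powersetCard k, ∑ l ∈ S, g S l
      = ∑ l ∈ U, ∑ S ∈ (U.powersetCard k).filter (fun S => l ∈ S), g S l := by
  refine Finset.sum_comm' ?_
  intro S l
  simp only [Finset.mem_filter, Finset.mem_powersetCard]
  constructor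
  · rintro ⟨⟨hsub, hcard⟩, hmem⟩
    exact ⟨⟨⟨hsub, hcard⟩, hmem⟩, hsub hmem⟩
  · rintro ⟨⟨⟨hsub, hcard⟩, hmem⟩, _⟩
    exact ⟨⟨hsub, hcard⟩, hmem⟩

private lemma sum_sum_pc (U : Finset ℕ) (k : ℕ) (hk : 1 ≤ k) (f : ℕ → ℝ) :
    ∑ S ∈ U.powersetCard k, ∑ l ∈ S, f l
      = ((U.card - 1).choose (k - 1) : ℝ) * ∑ l ∈ U, f l := by
  rw [swap_pc, Finset.mul_sum]
  refine Finset.sum_congr rfl fun l hl => ?_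
  rw [Finset.sum_const, nsmul_eq_mul, card_filter_mem_pc U k hk l hl]

private lemma sum_A_mem_pc (U : Finset ℕ) (k : ℕ) (hk : 1 ≤ k) (l : ℕ) (hl : l ∈ U)
    (f : ℕ → ℝ) :
    ∑ S ∈ (U.powersetCard k).filter (fun S => l ∈ S), ∑ i ∈ S, f i
      = ((U.card - 1).choose (k - 1) : ℝ) * f l
        + (if k = 1 then 0 else ((U.card - 2).choose (k - 2) : ℝ))
            * ((∑ i ∈ U, f i) - f l) := by
  rw [sum_filter_mem_pc U k hk l hl]
  have hlnd : ∀ S' ∈ (U.erase l).powersetCard (k - 1), l ∉ S' := by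
    intro S' hS'
    simp only [Finset.mem_powersetCard] at hS'
    exact fun h => (Finset.mem_erase.mp (hS'.1 h)).1 rfl
  have h1 : ∑ S' ∈ (U.erase l).powersetCard (k - 1), ∑ i ∈ insert l S', f i
      = ∑ S' ∈ (U.erase l).powersetCard (k - 1), (f l + ∑ i ∈ S', f i) := by
    refine Finset.sum_congr rfl fun S' hS' => ?_
    rw [Finset.sum_insert (hlnd S' hS')]
  rw [h1, Finset.sum_add_distrib, Finset.sum_const, Finset.card_powersetCard,
    Finset.card_erase_of_mem hl, nsmul_eq_mul]
  congr 1
  rcases eq_or_lt_of_le hk with h1 | h2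
  · subst h1
    simp
  · have hk2 : 1 ≤ k - 1 := by omega
    have hne : ¬ (k = 1) := by omega
    rw [sum_sum_pc (U.erase l) (k - 1) hk2 f, Finset.card_erase_of_mem hl, if_neg hne]
    have : U.card - 1 - 1 = U.card - 2 := by omega
    have h3 : k - 1 - 1 = k - 2 := by omega
    rw [this, h3, Finset.sum_erase_eq_sub hl]

private lemma sum_sq_pc (U : Finset ℕ) (k : ℕ) (hk : 1 ≤ k) (f : ℕ → ℝ) :
    ∑ S ∈ U.powersetCard k, (∑ l ∈ S, f l) ^ 2
      = ((U.card - 1).choose (k - 1) : ℝ) * ∑ l ∈ U, (f l) ^ 2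
        + (if k = 1 then 0 else ((U.card - 2).choose (k - 2) : ℝ))
            * ((∑ l ∈ U, f l) ^ 2 - ∑ l ∈ U, (f l) ^ 2) := by
  set b1 : ℝ := ((U.card - 1).choose (k - 1) : ℝ)
  set b2 : ℝ := (if k = 1 then 0 else ((U.card - 2).choose (k - 2) : ℝ))
  have h0 : ∑ S ∈ U.powersetCard k, (∑ l ∈ S, f l) ^ 2
      = ∑ S ∈ U.powersetCard k, ∑ l ∈ S, (f l * ∑ i ∈ S, f i) := by
    refine Finset.sum_congr rfl fun S _ => ?_
    rw [← Finset.sum_mul, sq]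
  rw [h0, swap_pc]
  have h1 : ∀ l ∈ U,
      ∑ S ∈ (U.powersetCard k).filter (fun S => l ∈ S), (f l * ∑ i ∈ S, f i)
        = f l * (b1 * f l + b2 * ((∑ i ∈ U, f i) - f l)) := by
    intro l hl
    rw [← Finset.mul_sum, sum_A_mem_pc U k hk l hl f]
  rw [Finset.sum_congr rfl h1]
  have h2 : ∀ l ∈ U, f l * (b1 * f l + b2 * ((∑ i ∈ U, f i) - f l))
      = b1 * f l ^ 2 + (b2 * (∑ i ∈ U, f i)) * f l - b2 * f l ^ 2 := by
    intro l _
    ring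
  rw [Finset.sum_congr rfl h2]
  rw [Finset.sum_sub_distrib, Finset.sum_add_distrib, ← Finset.mul_sum, ← Finset.mul_sum,
    ← Finset.mul_sum]
  ring

set_option maxHeartbeats 1000000 in
/-- when `μ = 0` (so `Y_i = ε_i`), the inequality `CV(1) − CV(2) > 0` holds
if and only if `((n−1) n₁ / n) (∑ ε_i)² > (n + n₁) ∑_j (ε_j − ε̄)²`, where
`ε̄ = (1/n) ∑ ε_i`. -/
theorem cv_difference_pos_iff (n n₁ : ℕ) (hn : 2 ≤ n) (hn₁ : 1 ≤ n₁) (hn₁' : n₁ ≤ n - 1)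
    (n₂ : ℕ) (hn₂ : n₂ = n - n₁) (ε : ℕ → ℝ) :
    (0 <
      (∑ S ∈ (Finset.range n).powersetCard n₁, ∑ i ∈ Finset.range n \ S, (ε i) ^ 2)
        - ∑ S ∈ (Finset.range n).powersetCard n₁, ∑ i ∈ Finset.range n \ S,
            (ε i - (1 / (n₁ : ℝ)) * ∑ l ∈ S, ε l) ^ 2) ↔
      ((n : ℝ) + n₁) *
          ∑ j ∈ Finset.range n, (ε j - (1 / (n : ℝ)) * ∑ i ∈ Finset.range n, ε i) ^ 2 <
        (((n : ℝ) - 1) * n₁ / n) * (∑ i ∈ Finset.range n, ε i) ^ 2 := by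
  set r : ℝ := (n : ℝ) with hr
  set a : ℝ := (n₁ : ℝ) with ha
  set T : ℝ := ∑ i ∈ Finset.range n, ε i with hT
  set Q : ℝ := ∑ i ∈ Finset.range n, (ε i) ^ 2 with hQ
  set b1 : ℝ := ((n - 1).choose (n₁ - 1) : ℝ) with hb1
  set b2 : ℝ := (if n₁ = 1 then 0 else ((n - 2).choose (n₁ - 2) : ℝ)) with hb2
  have hr2 : (2 : ℝ) ≤ r := by rw [hr]; exact_mod_cast hn
  have ha1 : (1 : ℝ) ≤ a := by rw [ha]; exact_mod_cast hn₁
  have hn₁n : n₁ < n := by omega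
  have han : a < r := by rw [ha, hr]; exact_mod_cast hn₁n
  have ha0 : a ≠ 0 := by linarith
  have hr0 : r ≠ 0 := by linarith
  have hr1 : r - 1 ≠ 0 := by linarith
  -- relation between b2 and b1
  have hbrel : (r - 1) * b2 = (a - 1) * b1 := by
    rcases eq_or_lt_of_le hn₁ with h1 | h2
    · rw [hb2, if_pos h1.symm]
      have : a = 1 := by rw [ha, ← h1]; norm_num
      rw [this]
      ring
    · have hne : ¬ (n₁ = 1) := by omega
      rw [hb2, if_neg hne]
      have hnat : (n - 2).succ * (n - 2).choose (n₁ - 2) = (n - 2).succ.choose (n₁ - 2).succ * (n₁ - 2).succ :=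
        Nat.add_one_mul_choose_eq (n - 2) (n₁ - 2)
      have e1 : Nat.succ (n - 2) = n - 1 := by omega
      have e2 : Nat.succ (n₁ - 2) = n₁ - 1 := by omega
      rw [e1, e2] at hnat
      have : ((n - 1 : ℕ) : ℝ) * ((n - 2).choose (n₁ - 2) : ℝ)
          = ((n - 1).choose (n₁ - 1) : ℝ) * ((n₁ - 1 : ℕ) : ℝ) := by exact_mod_cast hnat
      have c1 : ((n - 1 : ℕ) : ℝ) = r - 1 := by
        have : (1 : ℕ) ≤ n := by omega
        push_cast [Nat.cast_sub this]
        ring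
      have c2 : ((n₁ - 1 : ℕ) : ℝ) = a - 1 := by
        push_cast [Nat.cast_sub hn₁]
        ring
      rw [c1, c2] at this
      rw [this, hb1]
      ring
  have hb2eq : b2 = (a - 1) * b1 / (r - 1) := by
    field_simp
    linarith [hbrel]
  -- key sums
  have hcard : (Finset.range n).card = n := Finset.card_range n
  have hP1 : ∑ S ∈ (Finset.range n).powersetCard n₁, ∑ l ∈ S, ε l = b1 * T := by
    rw [sum_sum_pc (Finset.range n) n₁ hn₁ ε, hcard]
  have hP2 : ∑ S ∈ (Finset.range n).powersetCard n₁, (∑ l ∈ S, ε l) ^ 2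
      = b1 * Q + b2 * (T ^ 2 - Q) := by
    rw [sum_sq_pc (Finset.range n) n₁ hn₁ ε, hcard]
  -- rewrite the CV difference
  have hΔ : (∑ S ∈ (Finset.range n).powersetCard n₁, ∑ i ∈ Finset.range n \ S, (ε i) ^ 2)
        - ∑ S ∈ (Finset.range n).powersetCard n₁, ∑ i ∈ Finset.range n \ S,
            (ε i - (1 / a) * ∑ l ∈ S, ε l) ^ 2
      = (2 / a * T) * (b1 * T)
          - (2 / a + (r - a) / a ^ 2) * (b1 * Q + b2 * (T ^ 2 - Q)) := by
    rw [← Finset.sum_sub_distrib]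
    have hstep : ∀ S ∈ (Finset.range n).powersetCard n₁,
        ((∑ i ∈ Finset.range n \ S, (ε i) ^ 2)
          - ∑ i ∈ Finset.range n \ S, (ε i - (1 / a) * ∑ l ∈ S, ε l) ^ 2)
        = (2 / a * T) * (∑ l ∈ S, ε l)
            - (2 / a + (r - a) / a ^ 2) * (∑ l ∈ S, ε l) ^ 2 := by
      intro S hS
      simp only [Finset.mem_powersetCard] at hS
      obtain ⟨hsub, hScard⟩ := hS
      set A : ℝ := ∑ l ∈ S, ε l with hA
      have hsd : ∑ i ∈ Finset.range n \ S, ε i = T - A := by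
        rw [Finset.sum_sdiff_eq_sub hsub]
      have hcd : (Finset.range n \ S).card = n - n₁ := by
        rw [Finset.card_sdiff_of_subset hsub, hcard, hScard]
      have hterm : ∀ i ∈ Finset.range n \ S,
          (ε i) ^ 2 - (ε i - (1 / a) * A) ^ 2
            = (2 * ((1 / a) * A)) * ε i - ((1 / a) * A) ^ 2 := by
        intro i _
        ring
      rw [← Finset.sum_sub_distrib, Finset.sum_congr rfl hterm, Finset.sum_sub_distrib,
        ← Finset.mul_sum, hsd, Finset.sum_const, hcd, nsmul_eq_mul]
      have hc : ((n - n₁ : ℕ) : ℝ) = r - a := by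
        push_cast [Nat.cast_sub (le_of_lt hn₁n)]
        ring
      rw [hc]
      field_simp
      ring
    rw [Finset.sum_congr rfl hstep, Finset.sum_sub_distrib, ← Finset.mul_sum, ← Finset.mul_sum,
      hP1, hP2]
  set X : ℝ := (a + 1) * T ^ 2 - (r + a) * Q with hX
  set K : ℝ := b1 * (r - a) / (a ^ 2 * (r - 1)) with hK
  have hKX : (2 / a * T) * (b1 * T)
      - (2 / a + (r - a) / a ^ 2) * (b1 * Q + b2 * (T ^ 2 - Q)) = K * X := by
    rw [hb2eq, hK, hX]
    field_simp
    ring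
  have hb1pos : 0 < b1 := by
    rw [hb1]
    have : 0 < (n - 1).choose (n₁ - 1) := Nat.choose_pos (by omega)
    exact_mod_cast this
  have hKpos : 0 < K := by
    rw [hK]
    apply div_pos
    · apply mul_pos hb1pos
      linarith
    · apply mul_pos
      · positivity
      · linarith
  -- the RHS sum
  have hS2 : ∑ j ∈ Finset.range n, (ε j - (1 / r) * T) ^ 2 = Q - T ^ 2 / r := by
    have hterm : ∀ j ∈ Finset.range n,
        (ε j - (1 / r) * T) ^ 2 = (ε j) ^ 2 - (2 * T / r) * ε j + T ^ 2 / r ^ 2 := by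
      intro j _
      field_simp
      ring
    rw [Finset.sum_congr rfl hterm, Finset.sum_add_distrib, Finset.sum_sub_distrib,
      ← Finset.mul_sum, ← hQ, ← hT, Finset.sum_const, Finset.card_range, nsmul_eq_mul]
    field_simp
    ring
  have hid : (((r - 1) * a / r) * T ^ 2) - ((r + a) * (Q - T ^ 2 / r)) = X := by
    rw [hX]
    field_simp
    ring
  rw [hΔ, hKX, hS2, mul_pos_iff_of_pos_left hKpos]
  constructor
  · intro h
    linarith
  · intro h
    linarith
end
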